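/- arXiv:2308.03481 — 2 statements merged into one kernel-verified Lean document; each statement's English description precedes it below -/
import Mathlib

section
/- If A and B are n×n Hermitian complex matrices, then for each k, the difference of their k-th largest eigenvalues is bounded by the operator norm of A − B: max_k |λ_k(A) − λ_k(B)| ≤ ‖A − B‖. -/
open Matrix Finset Module

/-- The operator (spectral) norm of a square complex matrix. -/
noncomputable def opNorm {n : ℕ} (M : Matrix (Fin n) (Fin n) ℂ) : ℝ :=
  ‖LinearMap.toContinuousLinearMap (Matrix.toEuclideanLin M)‖

/-- `μ : Fin n → ℝ` lists the eigenvalues of the Hermitian matrix `A` in decreasing order: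
it is antitone and is a rearrangement of the eigenvalues of `A`. -/
def IsDecrEigenvalues {n : ℕ} {A : Matrix (Fin n) (Fin n) ℂ} (hA : A.IsHermitian)
    (μ : Fin n → ℝ) : Prop :=
  Antitone μ ∧ ∃ σ : Equiv.Perm (Fin n), ∀ k, μ k = hA.eigenvalues (σ k)

section helpers

variable {n : ℕ}

local notation "E" => EuclideanSpace ℂ (Fin n)

lemma quad_ge (T : E →L[ℂ] E) (b : OrthonormalBasis (Fin n) ℂ E)
    (μ : Fin n → ℝ) (hT : ∀ i, T (b i) = (μ i : ℂ) • b i)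
    (S : Finset (Fin n)) (m : ℝ) (hm : ∀ i ∈ S, m ≤ μ i)
    {x : E} (hx : x ∈ Submodule.span ℂ (b '' S)) :
    m * ‖x‖ ^ 2 ≤ RCLike.re (inner ℂ x (T x) : ℂ) := by
  set c : Fin n → ℂ := fun i => b.repr x i with hc
  have hzero : ∀ j ∉ S, c j = 0 := by
    intro j hj
    have hsub : Submodule.span ℂ (b '' S) ≤ LinearMap.ker (innerSL ℂ (b j)).toLinearMap := by
      rw [Submodule.span_le]
      rintro _ ⟨i, hi, rfl⟩
      have hne : j ≠ (i : Fin n) := by rintro rfl; exact hj hi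
      simpa [LinearMap.mem_ker] using b.orthonormal.2 hne
    have h0 := hsub hx
    simp only [SetLike.mem_coe, LinearMap.mem_ker] at h0
    rw [hc]
    simpa [b.repr_apply_apply] using h0
  have hxsum : x = ∑ i, c i • b i := (b.sum_repr x).symm
  have hTx : T x = ∑ i, (c i * (μ i : ℂ)) • b i := by
    conv_lhs => rw [hxsum]
    rw [map_sum]
    refine Finset.sum_congr rfl fun i _ => ?_
    rw [T.map_smul, hT i, smul_smul]
  have hinner : (inner ℂ x (T x) : ℂ) = ∑ i, (starRingEnd ℂ) (c i) * (c i * (μ i : ℂ)) := by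
    rw [hTx]
    conv_lhs => rw [hxsum]
    exact b.orthonormal.inner_sum c (fun i => c i * (μ i : ℂ)) Finset.univ
  have hre : RCLike.re (inner ℂ x (T x) : ℂ) = ∑ i, ‖c i‖ ^ 2 * μ i := by
    rw [hinner, map_sum]
    refine Finset.sum_congr rfl fun i _ => ?_
    rw [← mul_assoc, RCLike.conj_mul]
    simp [← Complex.ofReal_pow, ← Complex.ofReal_mul]
  have hnorm : ‖x‖ ^ 2 = ∑ i, ‖c i‖ ^ 2 := by
    have h1 : (inner ℂ x x : ℂ) = ∑ i, (starRingEnd ℂ) (c i) * c i := by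
      conv_lhs => rw [hxsum]
      exact b.orthonormal.inner_sum c c Finset.univ
    have h2 := inner_self_eq_norm_sq (𝕜 := ℂ) x
    rw [h1, map_sum] at h2
    rw [← h2]
    refine Finset.sum_congr rfl fun i _ => ?_
    rw [RCLike.conj_mul]
    simp [← Complex.ofReal_pow]
  rw [hre, hnorm, Finset.mul_sum]
  refine Finset.sum_le_sum fun i _ => ?_
  by_cases hi : i ∈ S
  · rw [mul_comm]
    exact mul_le_mul_of_nonneg_left (hm i hi) (by positivity)
  · simp [hzero i hi]

lemma quad_le (T : E →L[ℂ] E) (b : OrthonormalBasis (Fin n) ℂ E)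
    (μ : Fin n → ℝ) (hT : ∀ i, T (b i) = (μ i : ℂ) • b i)
    (S : Finset (Fin n)) (m : ℝ) (hm : ∀ i ∈ S, μ i ≤ m)
    {x : E} (hx : x ∈ Submodule.span ℂ (b '' S)) :
    RCLike.re (inner ℂ x (T x) : ℂ) ≤ m * ‖x‖ ^ 2 := by
  have hT' : ∀ i, (-T) (b i) = ((-μ i : ℝ) : ℂ) • b i := by
    intro i
    simp [hT i]
  have h := quad_ge (-T) b (fun i => -μ i) hT' S (-m) (fun i hi => neg_le_neg (hm i hi)) hx
  simp only [ContinuousLinearMap.neg_apply, inner_neg_right, map_neg, neg_mul] at h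
  linarith

lemma finrank_span_on (b : OrthonormalBasis (Fin n) ℂ E) (S : Finset (Fin n)) :
    finrank ℂ (Submodule.span ℂ (b '' S)) = S.card := by
  have hli : LinearIndependent ℂ (fun i : S => b i) :=
    (b.orthonormal.comp Subtype.val Subtype.val_injective).linearIndependent
  have himg : Set.range (fun i : S => b i) = b '' S := by
    ext y; simp [Set.mem_image]
  rw [← himg, finrank_span_eq_card hli, Fintype.card_coe]

lemma eig_apply {A : Matrix (Fin n) (Fin n) ℂ} (hA : A.IsHermitian)
    (σ : Equiv.Perm (Fin n)) (i : Fin n) :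
    LinearMap.toContinuousLinearMap (Matrix.toEuclideanLin A)
      ((hA.eigenvectorBasis.reindex σ.symm) i)
    = ((hA.eigenvalues (σ i) : ℂ)) • ((hA.eigenvectorBasis.reindex σ.symm) i) := by
  have h := hA.mulVec_eigenvectorBasis (σ i)
  rw [OrthonormalBasis.reindex_apply, Equiv.symm_symm]
  show Matrix.toEuclideanLin A (hA.eigenvectorBasis (σ i)) = _
  rw [Matrix.toEuclideanLin_apply, h]
  ext j
  simp only [PiLp.toLp_apply, Pi.smul_apply, PiLp.smul_apply, Complex.real_smul,
    smul_eq_mul]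

lemma weyl_one_side {A B : Matrix (Fin n) (Fin n) ℂ} (hA : A.IsHermitian) (hB : B.IsHermitian)
    (μA μB : Fin n → ℝ)
    (hμA : IsDecrEigenvalues hA μA) (hμB : IsDecrEigenvalues hB μB)
    (k : Fin n) : μA k - μB k ≤ opNorm (A - B) := by
  obtain ⟨hAa, σ, hσ⟩ := hμA
  obtain ⟨hBa, τ, hτ⟩ := hμB
  set bA := hA.eigenvectorBasis.reindex σ.symm with hbA
  set bB := hB.eigenvectorBasis.reindex τ.symm with hbB
  set TA := LinearMap.toContinuousLinearMap (Matrix.toEuclideanLin A) with hTA'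
  set TB := LinearMap.toContinuousLinearMap (Matrix.toEuclideanLin B) with hTB'
  have hTA : ∀ i, TA (bA i) = (μA i : ℂ) • bA i := by
    intro i; rw [hσ]; exact eig_apply hA σ i
  have hTB : ∀ i, TB (bB i) = (μB i : ℂ) • bB i := by
    intro i; rw [hτ]; exact eig_apply hB τ i
  set V := Submodule.span ℂ (bA '' Finset.Iic k) with hV
  set W := Submodule.span ℂ (bB '' Finset.Ici k) with hW
  have hdV : finrank ℂ V = (k : ℕ) + 1 := by
    rw [hV, finrank_span_on, Fin.card_Iic]
  have hdW : finrank ℂ W = n - (k : ℕ) := by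
    rw [hW, finrank_span_on, Fin.card_Ici]
  have hsum : finrank ℂ (V ⊔ W : Submodule ℂ (EuclideanSpace ℂ (Fin n)))
      + finrank ℂ (V ⊓ W : Submodule ℂ (EuclideanSpace ℂ (Fin n))) = n + 1 := by
    rw [Submodule.finrank_sup_add_finrank_inf_eq, hdV, hdW]
    have := k.isLt
    omega
  have hle : finrank ℂ (V ⊔ W : Submodule ℂ (EuclideanSpace ℂ (Fin n))) ≤ n := by
    have h := Submodule.finrank_le (V ⊔ W)
    rwa [finrank_euclideanSpace_fin] at h
  have hpos : 0 < finrank ℂ (V ⊓ W : Submodule ℂ (EuclideanSpace ℂ (Fin n))) := by omega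
  have hne : (V ⊓ W : Submodule ℂ (EuclideanSpace ℂ (Fin n))) ≠ ⊥ := by
    intro h
    rw [h, finrank_bot] at hpos
    exact lt_irrefl 0 hpos
  obtain ⟨x, hxVW, hx0⟩ := Submodule.ne_bot_iff _ |>.1 hne
  have h1 : μA k * ‖x‖ ^ 2 ≤ RCLike.re (inner ℂ x (TA x) : ℂ) :=
    quad_ge TA bA μA hTA _ (μA k) (fun i hi => hAa (Finset.mem_Iic.1 hi)) hxVW.1
  have h2 : RCLike.re (inner ℂ x (TB x) : ℂ) ≤ μB k * ‖x‖ ^ 2 :=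
    quad_le TB bB μB hTB _ (μB k) (fun i hi => hBa (Finset.mem_Ici.1 hi)) hxVW.2
  have hsubmap : LinearMap.toContinuousLinearMap (Matrix.toEuclideanLin (A - B)) = TA - TB := by
    rw [hTA', hTB', map_sub, map_sub]
  have h3 : RCLike.re (inner ℂ x ((TA - TB) x) : ℂ) ≤ opNorm (A - B) * ‖x‖ ^ 2 := by
    have c1 : RCLike.re (inner ℂ x ((TA - TB) x) : ℂ) ≤ ‖(inner ℂ x ((TA - TB) x) : ℂ)‖ :=
      RCLike.re_le_norm _
    have c2 : ‖(inner ℂ x ((TA - TB) x) : ℂ)‖ ≤ ‖x‖ * ‖(TA - TB) x‖ := norm_inner_le_norm _ _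
    have c3 : ‖(TA - TB) x‖ ≤ ‖TA - TB‖ * ‖x‖ := (TA - TB).le_opNorm x
    have c4 : ‖x‖ * ‖(TA - TB) x‖ ≤ ‖x‖ * (‖TA - TB‖ * ‖x‖) :=
      mul_le_mul_of_nonneg_left c3 (norm_nonneg x)
    have c5 : opNorm (A - B) = ‖TA - TB‖ := by rw [opNorm, hsubmap]
    calc RCLike.re (inner ℂ x ((TA - TB) x) : ℂ) ≤ ‖x‖ * (‖TA - TB‖ * ‖x‖) :=
          le_trans c1 (le_trans c2 c4)
      _ = ‖TA - TB‖ * ‖x‖ ^ 2 := by ring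
      _ = opNorm (A - B) * ‖x‖ ^ 2 := by rw [c5]
  have h4 : RCLike.re (inner ℂ x ((TA - TB) x) : ℂ)
      = RCLike.re (inner ℂ x (TA x) : ℂ) - RCLike.re (inner ℂ x (TB x) : ℂ) := by
    rw [ContinuousLinearMap.sub_apply, inner_sub_right, map_sub]
  have hx2 : 0 < ‖x‖ ^ 2 := pow_pos (norm_pos_iff.2 hx0) 2
  have hfin : (μA k - μB k) * ‖x‖ ^ 2 ≤ opNorm (A - B) * ‖x‖ ^ 2 := by
    rw [sub_mul]; rw [h4] at h3; linarith
  exact le_of_mul_le_mul_right hfin hx2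

end helpers

/-- Weyl's perturbation inequality: for Hermitian `n × n` complex matrices `A` and `B`,
the `k`-th largest eigenvalues satisfy `|λ_k(A) − λ_k(B)| ≤ ‖A − B‖`. -/
theorem eigenvalue_perturbation {n : ℕ}
    {A B : Matrix (Fin n) (Fin n) ℂ} (hA : A.IsHermitian) (hB : B.IsHermitian)
    (μA μB : Fin n → ℝ)
    (hμA : IsDecrEigenvalues hA μA) (hμB : IsDecrEigenvalues hB μB) :
    ∀ k, |μA k - μB k| ≤ opNorm (A - B) := by
  intro k
  have hnorm : opNorm (B - A) = opNorm (A - B) := by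
    rw [opNorm, opNorm, ← neg_sub A B, map_neg, map_neg, norm_neg]
  rw [abs_sub_le_iff]
  constructor
  · exact weyl_one_side hA hB μA μB hμA hμB k
  · have h := weyl_one_side hB hA μB μA hμB hμA k
    rwa [hnorm] at h
end

section
/- Fix 0 < y ≤ 1, a probability measure H on [0,∞)×(0,∞), z ∈ ℂ⁺, and s̲, g̲ ∈ ℂ⁺ such that 1 + u g̲ + t s̲ ≠ 0 H-almost everywhere. If (z, s̲, g̲) satisfies the system z = −(1−y)/s̲ − (y/s̲)·∫ dH(u,t)/(1 + u g̲ + t s̲) and z = −1/g̲ + y·∫ t dH(u,t)/(1 + u g̲ + t s̲), then y·g̲²·∫ u dH(u,t)/(1 + u g̲ + t s̲) + s̲ − g̲ = 0. -/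
open MeasureTheory

/-- If `(z, s̲, g̲)` satisfies the system
`z = −(1−y)/s̲ − (y/s̲)·∫ dH/(1 + u g̲ + t s̲)` and
`z = −1/g̲ + y·∫ t dH/(1 + u g̲ + t s̲)`, then
`y·g̲²·∫ u dH/(1 + u g̲ + t s̲) + s̲ − g̲ = 0`. -/
theorem equating_the_two_equations
    (y : ℝ) (hy0 : 0 < y) (hy1 : y ≤ 1)
    (H : Measure (ℝ × ℝ)) [IsProbabilityMeasure H]
    (hH : ∀ᵐ p ∂H, 0 ≤ p.1 ∧ 0 < p.2)
    (z s g : ℂ) (hz : 0 < z.im) (hs : 0 < s.im) (hg : 0 < g.im)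
    (hden : ∀ᵐ p ∂H, (1 : ℂ) + (p.1 : ℂ) * g + (p.2 : ℂ) * s ≠ 0)
    (hint1 : Integrable (fun p : ℝ × ℝ => ((1 : ℂ) + (p.1 : ℂ) * g + (p.2 : ℂ) * s)⁻¹) H)
    (hintt : Integrable
      (fun p : ℝ × ℝ => (p.2 : ℂ) * ((1 : ℂ) + (p.1 : ℂ) * g + (p.2 : ℂ) * s)⁻¹) H)
    (hintu : Integrable
      (fun p : ℝ × ℝ => (p.1 : ℂ) * ((1 : ℂ) + (p.1 : ℂ) * g + (p.2 : ℂ) * s)⁻¹) H)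
    (heq1 : z = -((1 : ℂ) - y) / s
        - ((y : ℂ) / s) * ∫ p : ℝ × ℝ, ((1 : ℂ) + (p.1 : ℂ) * g + (p.2 : ℂ) * s)⁻¹ ∂H)
    (heq2 : z = -1 / g
        + (y : ℂ) * ∫ p : ℝ × ℝ, (p.2 : ℂ) * ((1 : ℂ) + (p.1 : ℂ) * g + (p.2 : ℂ) * s)⁻¹ ∂H) :
    (y : ℂ) * g ^ 2
        * (∫ p : ℝ × ℝ, (p.1 : ℂ) * ((1 : ℂ) + (p.1 : ℂ) * g + (p.2 : ℂ) * s)⁻¹ ∂H)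
      + s - g = 0 := by

  have hs0 : s ≠ 0 := fun h => by simp [h] at hs
  have hg0 : g ≠ 0 := fun h => by simp [h] at hg
  set I1 := ∫ p : ℝ × ℝ, ((1 : ℂ) + (p.1 : ℂ) * g + (p.2 : ℂ) * s)⁻¹ ∂H with hI1
  set It := ∫ p : ℝ × ℝ, (p.2 : ℂ) * ((1 : ℂ) + (p.1 : ℂ) * g + (p.2 : ℂ) * s)⁻¹ ∂H with hIt
  set Iu := ∫ p : ℝ × ℝ, (p.1 : ℂ) * ((1 : ℂ) + (p.1 : ℂ) * g + (p.2 : ℂ) * s)⁻¹ ∂H with hIu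
  have key : g * Iu = 1 - I1 - s * It := by
    rw [hIu, ← integral_const_mul]
    have h2 : ∫ p : ℝ × ℝ, ((1 : ℂ) - ((1 : ℂ) + (p.1 : ℂ) * g + (p.2 : ℂ) * s)⁻¹
        - s * ((p.2 : ℂ) * ((1 : ℂ) + (p.1 : ℂ) * g + (p.2 : ℂ) * s)⁻¹)) ∂H
        = 1 - I1 - s * It := by
      have ia : Integrable
          (fun p : ℝ × ℝ => (1 : ℂ) - ((1 : ℂ) + (p.1 : ℂ) * g + (p.2 : ℂ) * s)⁻¹) H :=
        (integrable_const 1).sub hint1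
      rw [integral_sub ia (hintt.const_mul s),
        integral_sub (integrable_const 1) hint1, integral_const_mul, integral_const]
      simp [hI1, hIt]
    rw [← h2]
    refine integral_congr_ae ?_
    filter_upwards [hden] with p hp
    field_simp
    have hp' : (1 : ℂ) + g * (p.1 : ℂ) + (p.2 : ℂ) * s ≠ 0 := by rw [mul_comm g]; exact hp
    field_simp
    ring
  have h := heq1.symm.trans heq2
  field_simp at h
  have hkey2 : (y : ℂ) * g ^ 2 * Iu = (y : ℂ) * g * (1 - I1 - s * It) := by
    rw [pow_two, mul_assoc, mul_assoc, key]; ring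
  rw [hkey2]
  linear_combination h
end
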